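/- For p = 1, the homogeneous Besov space B_1(ℝ) is trivial: any locally integrable function u on ℝ with ∫∫_{ℝ×ℝ} |u(t) − u(s)| / |t − s|² ds dt < ∞ is (almost everywhere equal to) a constant. -/

import Mathlib

open MeasureTheory

/-- The homogeneous `p`-Besov kernel of a function `u : ℝ → ℂ`. -/
noncomputable def Bker (p : ℝ) (u : ℝ → ℂ) : ℝ × ℝ → ℝ :=
  fun q => ‖u q.1 - u q.2‖ ^ p / |q.1 - q.2| ^ 2

open Set Filter Metric Topology

namespace Stmt9Aux

lemma Bker_nonneg (u : ℝ → ℂ) (q : ℝ × ℝ) : 0 ≤ Bker 1 u q := by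
  unfold Bker
  positivity

lemma abs_eq_Bker (u : ℝ → ℂ) {q : ℝ × ℝ} (h : q.1 ≠ q.2) :
    ‖u q.1 - u q.2‖ = Bker 1 u q * |q.1 - q.2| ^ 2 := by
  unfold Bker
  rw [Real.rpow_one, div_mul_cancel₀]
  have : q.1 - q.2 ≠ 0 := sub_ne_zero.mpr h
  positivity

/-- The key adjacent-interval estimate: the averages of `u` over two adjacent
intervals of length `h` differ by at most `4` times the Besov integral over
their product. -/
lemma adj (u : ℝ → ℂ) (hloc : LocallyIntegrable u) (hint : Integrable (Bker 1 u))
    (a h : ℝ) (hh : 0 < h) :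
    dist (⨍ t in Ico a (a + h), u t) (⨍ t in Ico (a + h) (a + 2 * h), u t)
      ≤ 4 * ∫ p in (Ico a (a + h)) ×ˢ (Ico (a + h) (a + 2 * h)), Bker 1 u p := by
  set I := Ico a (a + h) with hIdef
  set J := Ico (a + h) (a + 2 * h) with hJdef
  set P := I ×ˢ J with hPdef
  have hIvol : volume I = ENNReal.ofReal h := by
    rw [hIdef, Real.volume_Ico]; congr 1; ring
  have hJvol : volume J = ENNReal.ofReal h := by
    rw [hJdef, Real.volume_Ico]; congr 1; ring
  have hIt : (volume I).toReal = h := by rw [hIvol, ENNReal.toReal_ofReal hh.le]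
  have hJt : (volume J).toReal = h := by rw [hJvol, ENNReal.toReal_ofReal hh.le]
  haveI : Fact (volume I < ⊤) := ⟨by rw [hIvol]; exact ENNReal.ofReal_lt_top⟩
  haveI : Fact (volume J < ⊤) := ⟨by rw [hJvol]; exact ENNReal.ofReal_lt_top⟩
  have huI : IntegrableOn u I := by
    refine (hloc.integrableOn_isCompact (isCompact_Icc (a := a) (b := a + h))).mono_set ?_
    exact Ico_subset_Icc_self
  have huJ : IntegrableOn u J := by
    refine (hloc.integrableOn_isCompact (isCompact_Icc (a := a + h) (b := a + 2 * h))).mono_set ?_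
    exact Ico_subset_Icc_self
  have hPrestrict : (volume : Measure (ℝ × ℝ)).restrict P
      = ((volume : Measure ℝ).restrict I).prod ((volume : Measure ℝ).restrict J) := by
    rw [Measure.prod_restrict, ← Measure.volume_eq_prod]
  -- integrability of the two coordinate functions on `P`
  have hi1 : Integrable (fun p : ℝ × ℝ => u p.1) ((volume : Measure (ℝ × ℝ)).restrict P) := by
    rw [hPrestrict]
    have := Integrable.mul_prod (L := ℂ) huI
      (integrable_const (μ := (volume : Measure ℝ).restrict J) (1 : ℂ))
    simpa using this
  have hi2 : Integrable (fun p : ℝ × ℝ => u p.2) ((volume : Measure (ℝ × ℝ)).restrict P) := by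
    rw [hPrestrict]
    have := Integrable.mul_prod (L := ℂ)
      (integrable_const (μ := (volume : Measure ℝ).restrict I) (1 : ℂ)) huJ
    simpa using this
  -- the key identity
  have key : ∫ p in P, (u p.1 - u p.2)
      = (h : ℂ) * ((∫ t in I, u t) - ∫ t in J, u t) := by
    rw [integral_sub hi1 hi2]
    have h1 : ∫ p in P, u p.1 = (∫ t in I, u t) * (h : ℂ) := by
      have := setIntegral_prod_mul (μ := (volume : Measure ℝ)) (ν := (volume : Measure ℝ))
        u (fun _ => (1 : ℂ)) I J
      rw [← Measure.volume_eq_prod] at this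
      simpa [measureReal_def, hJt, Complex.real_smul] using this
    have h2 : ∫ p in P, u p.2 = (h : ℂ) * ∫ t in J, u t := by
      have := setIntegral_prod_mul (μ := (volume : Measure ℝ)) (ν := (volume : Measure ℝ))
        (fun _ => (1 : ℂ)) u I J
      rw [← Measure.volume_eq_prod] at this
      simpa [measureReal_def, hIt, Complex.real_smul] using this
    rw [h1, h2]; ring
  -- the norm bound
  have hnorm : ‖∫ p in P, (u p.1 - u p.2)‖ ≤ 4 * h ^ 2 * ∫ p in P, Bker 1 u p := by
    calc ‖∫ p in P, (u p.1 - u p.2)‖ ≤ ∫ p in P, ‖u p.1 - u p.2‖ :=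
          norm_integral_le_integral_norm _
    _ ≤ ∫ p in P, 4 * h ^ 2 * Bker 1 u p := by
        refine setIntegral_mono_on ((hi1.sub hi2).norm) ((hint.integrableOn).const_mul _)
          (measurableSet_Ico.prod measurableSet_Ico) ?_
        rintro p ⟨hp1, hp2⟩
        rw [hIdef, mem_Ico] at hp1
        rw [hJdef, mem_Ico] at hp2
        have hlt : p.1 < p.2 := lt_of_lt_of_le hp1.2 hp2.1
        have habs : |p.1 - p.2| ≤ 2 * h := by
          rw [abs_sub_comm, abs_of_pos (by linarith)]
          linarith [hp1.1, hp2.2]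
        have : ‖u p.1 - u p.2‖ = ‖u p.1 - u p.2‖ := rfl
        rw [this, abs_eq_Bker u hlt.ne]
        have h1 : |p.1 - p.2| ^ 2 ≤ (2 * h) ^ 2 := by
          have := abs_nonneg (p.1 - p.2)
          nlinarith
        have h2 : (2 * h) ^ 2 = 4 * h ^ 2 := by ring
        calc Bker 1 u p * |p.1 - p.2| ^ 2 ≤ Bker 1 u p * (2 * h) ^ 2 :=
              mul_le_mul_of_nonneg_left h1 (Bker_nonneg u p)
        _ = 4 * h ^ 2 * Bker 1 u p := by ring
    _ = 4 * h ^ 2 * ∫ p in P, Bker 1 u p := by rw [integral_const_mul]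
  -- put it together
  have hsub : (∫ t in I, u t) - ∫ t in J, u t
      = (h : ℂ)⁻¹ * ∫ p in P, (u p.1 - u p.2) := by
    rw [key, ← mul_assoc, inv_mul_cancel₀ (by exact_mod_cast hh.ne'), one_mul]
  have havg : dist (⨍ t in I, u t) (⨍ t in J, u t)
      = h⁻¹ * (h⁻¹ * ‖∫ p in P, (u p.1 - u p.2)‖) := by
    rw [dist_eq_norm, setAverage_eq, setAverage_eq, measureReal_def, measureReal_def, hIt, hJt, ← smul_sub, hsub, norm_smul]
    simp [norm_inv, Real.norm_eq_abs, abs_of_pos hh]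
  rw [havg]
  have h4 : h⁻¹ * (h⁻¹ * (4 * h ^ 2 * ∫ p in P, Bker 1 u p)) = 4 * ∫ p in P, Bker 1 u p := by
    field_simp
  calc h⁻¹ * (h⁻¹ * ‖∫ p in P, (u p.1 - u p.2)‖)
      ≤ h⁻¹ * (h⁻¹ * (4 * h ^ 2 * ∫ p in P, Bker 1 u p)) := by
        have hinv : (0:ℝ) ≤ h⁻¹ := (inv_pos.mpr hh).le
        exact mul_le_mul_of_nonneg_left (mul_le_mul_of_nonneg_left hnorm hinv) hinv
  _ = 4 * ∫ p in P, Bker 1 u p := h4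

/-- The near-diagonal strip. -/
def Dset (x y h : ℝ) : Set (ℝ × ℝ) :=
  {p : ℝ × ℝ | x - h ≤ p.1 ∧ p.1 ≤ y ∧ p.1 < p.2 ∧ p.2 ≤ p.1 + 2 * h}

lemma Dset_measurable (x y h : ℝ) : MeasurableSet (Dset x y h) := by
  have m1 : Measurable fun p : ℝ × ℝ => p.1 := measurable_fst
  have m2 : Measurable fun p : ℝ × ℝ => p.2 := measurable_snd
  unfold Dset
  simp only [setOf_and]
  exact (measurableSet_le measurable_const m1).inter
    ((measurableSet_le m1 measurable_const).inter
      ((measurableSet_lt m1 m2).inter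
        (measurableSet_le m2 (m1.add_const (2 * h)))))

/-- The chaining estimate. -/
lemma chain (u : ℝ → ℂ) (hloc : LocallyIntegrable u) (hint : Integrable (Bker 1 u))
    (x y : ℝ) (hxy : x < y) (n : ℕ) (hn : 1 ≤ n) :
    dist (⨍ t in Ico (x - (y - x) / n / 2) (x + (y - x) / n / 2), u t)
      (⨍ t in Ico (y - (y - x) / n / 2) (y + (y - x) / n / 2), u t)
      ≤ 4 * ∫ p in Dset x y ((y - x) / n), Bker 1 u p := by
  set h := (y - x) / n with hdef
  have hn0 : (0:ℝ) < n := by exact_mod_cast hn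
  have hh : 0 < h := div_pos (sub_pos.mpr hxy) hn0
  have hnh : (n : ℝ) * h = y - x := by
    rw [hdef]; field_simp
  set c : ℕ → ℝ := fun k => x + k * h - h / 2 with hcdef
  set I : ℕ → Set ℝ := fun k => Ico (c k) (c k + h) with hIdef
  set v : ℕ → ℂ := fun k => ⨍ t in I k, u t with hvdef
  have hadj : ∀ k : ℕ, dist (v k) (v (k + 1))
      ≤ 4 * ∫ p in (I k) ×ˢ (I (k + 1)), Bker 1 u p := by
    intro k
    simp only [hvdef, hIdef]
    have hc : c (k + 1) = c k + h := by simp only [hcdef]; push_cast; ring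
    have hc2 : c (k + 1) + h = c k + 2 * h := by rw [hc]; ring
    rw [hc2, hc]
    exact adj u hloc hint (c k) h hh
  have htele : dist (v 0) (v n) ≤ ∑ k ∈ Finset.range n, dist (v k) (v (k + 1)) :=
    dist_le_range_sum_dist v n
  have hIdisj : ∀ k j : ℕ, k < j → Disjoint (I k) (I j) := by
    intro k j hkj
    rw [hIdef, Set.disjoint_left]
    intro t ht1 ht2
    rw [mem_Ico] at ht1 ht2
    have hk1 : (k : ℝ) + 1 ≤ j := by exact_mod_cast hkj
    have : c k + h ≤ c j := by
      rw [hcdef]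
      simp only
      nlinarith
    linarith [ht1.2, ht2.1]
  have hsum : ∑ k ∈ Finset.range n, ∫ p in (I k) ×ˢ (I (k + 1)), Bker 1 u p
      = ∫ p in ⋃ k ∈ Finset.range n, (I k) ×ˢ (I (k + 1)), Bker 1 u p := by
    refine (integral_biUnion_finset (Finset.range n) (fun k _ => ?_) ?_ (fun k _ => hint.integrableOn)).symm
    · exact measurableSet_Ico.prod measurableSet_Ico
    · intro k hk j hj hkj
      rcases lt_or_gt_of_ne hkj with hlt | hlt
      · exact Disjoint.set_prod_left (hIdisj k j hlt) _ _
      · exact Disjoint.set_prod_left (hIdisj j k hlt).symm _ _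
  have hsubD : (⋃ k ∈ Finset.range n, (I k) ×ˢ (I (k + 1))) ⊆ Dset x y h := by
    intro p hp
    simp only [mem_iUnion, Finset.mem_range, exists_prop] at hp
    obtain ⟨k, hk, hp1, hp2⟩ := hp
    rw [hIdef, mem_Ico] at hp1 hp2
    have hck : c k = x + k * h - h / 2 := rfl
    have hck1 : c (k + 1) = x + (k + 1 : ℕ) * h - h / 2 := rfl
    have hcast : ((k + 1 : ℕ) : ℝ) = (k : ℝ) + 1 := by push_cast; ring
    rw [hck] at hp1
    rw [hck1, hcast] at hp2
    have hkn : (k : ℝ) + 1 ≤ n := by exact_mod_cast hk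
    have hknonneg : (0:ℝ) ≤ k := Nat.cast_nonneg k
    refine ⟨by nlinarith [hp1.1], by nlinarith [hp1.2], by nlinarith [hp1.2, hp2.1],
      by nlinarith [hp1.1, hp2.2]⟩
  have hmono : ∫ p in ⋃ k ∈ Finset.range n, (I k) ×ˢ (I (k + 1)), Bker 1 u p
      ≤ ∫ p in Dset x y h, Bker 1 u p := by
    refine setIntegral_mono_set hint.integrableOn ?_ (HasSubset.Subset.eventuallyLE hsubD)
    exact Eventually.of_forall (Bker_nonneg u)
  -- identify the endpoints
  have hI0 : I 0 = Ico (x - h / 2) (x + h / 2) := by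
    have h1 : c 0 = x - h / 2 := by simp only [hcdef]; push_cast; ring
    simp only [hIdef, h1]; ring_nf
  have hIn : I n = Ico (y - h / 2) (y + h / 2) := by
    have h1 : c n = y - h / 2 := by simp only [hcdef]; linarith [hnh]
    simp only [hIdef, h1]; ring_nf
  have final : dist (v 0) (v n) ≤ 4 * ∫ p in Dset x y h, Bker 1 u p := by
    calc dist (v 0) (v n) ≤ ∑ k ∈ Finset.range n, dist (v k) (v (k + 1)) := htele
    _ ≤ ∑ k ∈ Finset.range n, 4 * ∫ p in (I k) ×ˢ (I (k + 1)), Bker 1 u p :=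
        Finset.sum_le_sum (fun k _ => hadj k)
    _ = 4 * ∑ k ∈ Finset.range n, ∫ p in (I k) ×ˢ (I (k + 1)), Bker 1 u p := by
        rw [Finset.mul_sum]
    _ = 4 * ∫ p in ⋃ k ∈ Finset.range n, (I k) ×ˢ (I (k + 1)), Bker 1 u p := by rw [hsum]
    _ ≤ 4 * ∫ p in Dset x y h, Bker 1 u p := by linarith [hmono]
  simp only [hvdef, hI0, hIn] at final
  exact final

/-- Average over the symmetric `Ico` interval equals average over the closed ball. -/
lemma avg_Ico (u : ℝ → ℂ) (z r : ℝ) :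
    ⨍ t in Ico (z - r) (z + r), u t = ⨍ t in closedBall z r, u t := by
  rw [Real.closedBall_eq_Icc, setAverage_eq, setAverage_eq,
    setIntegral_congr_set Ico_ae_eq_Icc, measureReal_congr Ico_ae_eq_Icc]

end Stmt9Aux

open Stmt9Aux

/-- The homogeneous Besov space `B_1(ℝ)` is trivial: any locally
integrable `u : ℝ → ℂ` with `∫∫ |u(t) − u(s)| / |t − s|² ds dt < ∞` is a.e.
equal to a constant. -/
theorem stmt9 (u : ℝ → ℂ) (hloc : LocallyIntegrable u)
    (hint : Integrable (Bker 1 u)) :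
    ∃ c : ℂ, ∀ᵐ t : ℝ, u t = c := by
  have hae := IsUnifLocDoublingMeasure.ae_tendsto_average (μ := (volume : Measure ℝ)) hloc 1
  -- key step: any two "Lebesgue points" have the same value
  have key : ∀ x y : ℝ,
      (∀ {ι : Type} {l : Filter ι} (w : ι → ℝ) (δ : ι → ℝ),
        Tendsto δ l (𝓝[>] 0) → (∀ᶠ j in l, x ∈ closedBall (w j) (1 * δ j)) →
        Tendsto (fun j => ⨍ s in closedBall (w j) (δ j), u s) l (𝓝 (u x))) →
      (∀ {ι : Type} {l : Filter ι} (w : ι → ℝ) (δ : ι → ℝ),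
        Tendsto δ l (𝓝[>] 0) → (∀ᶠ j in l, y ∈ closedBall (w j) (1 * δ j)) →
        Tendsto (fun j => ⨍ s in closedBall (w j) (δ j), u s) l (𝓝 (u y))) →
      x < y → u x = u y := by
    intro x y hx hy hxy
    set δ : ℕ → ℝ := fun n => (y - x) / n / 2 with hδdef
    have hδ0 : Tendsto δ atTop (𝓝 0) := by
      have h1 : Tendsto (fun n : ℕ => ((y - x) / 2) / n) atTop (𝓝 0) :=
        tendsto_const_div_atTop_nhds_zero_nat _
      refine h1.congr (fun n => ?_)
      rw [hδdef]; simp only; ring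
    have hδpos : ∀ᶠ n : ℕ in atTop, 0 < δ n := by
      filter_upwards [eventually_ge_atTop 1] with n hn
      have hn0 : (0:ℝ) < n := by exact_mod_cast hn
      simp only [hδdef]
      exact div_pos (div_pos (sub_pos.mpr hxy) hn0) two_pos
    have hδ : Tendsto δ atTop (𝓝[>] 0) :=
      tendsto_nhdsWithin_of_tendsto_nhds_of_eventually_within _ hδ0
        (hδpos.mono fun n hn => hn)
    have hmemx : ∀ᶠ n : ℕ in atTop, x ∈ closedBall ((fun _ : ℕ => x) n) (1 * δ n) := by
      filter_upwards [hδpos] with n hn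
      simp [mem_closedBall, hn.le]
    have hmemy : ∀ᶠ n : ℕ in atTop, y ∈ closedBall ((fun _ : ℕ => y) n) (1 * δ n) := by
      filter_upwards [hδpos] with n hn
      simp [mem_closedBall, hn.le]
    have h1 : Tendsto (fun n : ℕ => ⨍ s in closedBall x (δ n), u s) atTop (𝓝 (u x)) :=
      hx (fun _ => x) δ hδ hmemx
    have h2 : Tendsto (fun n : ℕ => ⨍ s in closedBall y (δ n), u s) atTop (𝓝 (u y)) :=
      hy (fun _ => y) δ hδ hmemy
    have hdist : Tendsto
        (fun n : ℕ => dist (⨍ s in closedBall x (δ n), u s) (⨍ s in closedBall y (δ n), u s))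
        atTop (𝓝 (dist (u x) (u y))) := h1.dist h2
    -- the right-hand side tends to `0`
    have hDlim : Tendsto (fun n : ℕ => ∫ p in Dset x y ((y - x) / n), Bker 1 u p)
        atTop (𝓝 0) := by
      have hdc := tendsto_integral_filter_of_dominated_convergence
        (μ := (volume : Measure (ℝ × ℝ))) (l := (atTop : Filter ℕ))
        (F := fun n : ℕ => (Dset x y ((y - x) / n)).indicator (Bker 1 u))
        (f := fun _ => (0 : ℝ)) (bound := fun p => ‖Bker 1 u p‖)
        (Eventually.of_forall fun n =>
          hint.aestronglyMeasurable.indicator (Dset_measurable _ _ _))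
        (Eventually.of_forall fun n => Eventually.of_forall fun p =>
          norm_indicator_le_norm_self _ _)
        hint.norm
        ?_
      · have h0 : (∫ _ : ℝ × ℝ, (0:ℝ)) = 0 := integral_zero _ _
        rw [h0] at hdc
        refine hdc.congr fun n => ?_
        rw [integral_indicator (Dset_measurable _ _ _)]
      · refine Eventually.of_forall fun p => ?_
        by_cases hp : p.1 < p.2
        · have h0 : Tendsto (fun n : ℕ => 2 * ((y - x) / n)) atTop (𝓝 0) := by
            have := tendsto_const_div_atTop_nhds_zero_nat (y - x)
            simpa using this.const_mul 2
          have hev : ∀ᶠ n : ℕ in atTop, 2 * ((y - x) / n) < p.2 - p.1 :=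
            h0.eventually (eventually_lt_nhds (by linarith : (0:ℝ) < p.2 - p.1))
          refine Tendsto.congr' ?_ tendsto_const_nhds
          filter_upwards [hev] with n hn
          symm
          apply indicator_of_notMem
          rintro ⟨-, -, -, h4⟩
          linarith
        · refine Tendsto.congr' ?_ tendsto_const_nhds
          refine Eventually.of_forall fun n => ?_
          symm
          apply indicator_of_notMem
          rintro ⟨-, -, h3, -⟩
          exact hp h3
    have hDlim4 : Tendsto (fun n : ℕ => 4 * ∫ p in Dset x y ((y - x) / n), Bker 1 u p)
        atTop (𝓝 0) := by
      have := hDlim.const_mul (4:ℝ)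
      simpa using this
    -- the chaining bound holds eventually
    have hle : ∀ᶠ n : ℕ in atTop,
        dist (⨍ s in closedBall x (δ n), u s) (⨍ s in closedBall y (δ n), u s)
          ≤ 4 * ∫ p in Dset x y ((y - x) / n), Bker 1 u p := by
      filter_upwards [eventually_ge_atTop 1] with n hn
      have := chain u hloc hint x y hxy n hn
      rw [avg_Ico, avg_Ico] at this
      exact this
    have hfin : dist (u x) (u y) ≤ 0 := le_of_tendsto_of_tendsto hdist hDlim4 hle
    exact dist_le_zero.mp hfin
  obtain ⟨x₀, hx₀⟩ := hae.exists
  refine ⟨u x₀, ?_⟩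
  filter_upwards [hae] with t ht
  rcases lt_trichotomy t x₀ with h | h | h
  · exact key t x₀ (fun w δ a b => ht w δ a b) (fun w δ a b => hx₀ w δ a b) h
  · rw [h]
  · exact (key x₀ t (fun w δ a b => hx₀ w δ a b) (fun w δ a b => ht w δ a b) h).symm
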